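/- Let G be a group, n ≥ 1, let a : Fin 3 → G and b : Fin (2n) → G be injective maps, and let P be an invertible pairing involution on Fin 3 × Fin (2n) such that for every cell p = (i,j) one has a i * b j = a (P p).1 * b (P p).2. Then G contains a nontrivial element of finite order, i.e., there exists g ∈ G with g ≠ 1 and IsOfFinOrder g. -/
import Mathlib

private lemma finOrder_of_finite_invariant {G : Type*} [Group G] (g : G) (S : Set G)
    (hfin : S.Finite) (hne : S.Nonempty) (hmap : ∀ x ∈ S, g * x ∈ S) :
    IsOfFinOrder g := by
  obtain ⟨s, hs⟩ := hne
  have hmem : ∀ m : ℕ, g ^ m * s ∈ S := by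
    intro m
    induction m with
    | zero => simpa using hs
    | succ m ih =>
        rw [pow_succ', mul_assoc]
        exact hmap _ ih
  have hni : ¬ Function.Injective (fun m : ℕ => g ^ m * s) := by
    intro hinj
    exact Set.infinite_of_injective_forall_mem hinj hmem hfin
  rw [Function.not_injective_iff] at hni
  obtain ⟨p, q, heq, hpq⟩ := hni
  have key : ∀ p q : ℕ, p < q → g ^ p * s = g ^ q * s → IsOfFinOrder g := by
    intro p q hlt heq
    have h1 : g ^ (q - p) * (g ^ p * s) = g ^ q * s := by
      rw [← mul_assoc, ← pow_add]
      congr 2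
      omega
    have h2 : g ^ (q - p) * (g ^ p * s) = 1 * (g ^ p * s) := by
      rw [one_mul, h1, ← heq]
    have h3 : g ^ (q - p) = 1 := mul_right_cancel h2
    exact isOfFinOrder_iff_pow_eq_one.mpr ⟨q - p, by omega, h3⟩
  rcases Nat.lt_or_ge p q with h | h
  · exact key p q h heq
  · exact key q p (by omega) heq.symm

/-- Group-level form of the main theorem: if a group `G` contains pairwise distinct
elements `a₁, a₂, a₃` and pairwise distinct `b₁, …, b_{2n}` satisfying the relations
of an invertible pairing involution `P` on `Fin 3 × Fin (2n)`, then `G` contains a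
nontrivial element of finite order. -/
theorem group_with_invertible_pairing_relations_has_torsion
    {G : Type*} [Group G] (n : ℕ) (hn : 1 ≤ n)
    (a : Fin 3 → G) (b : Fin (2 * n) → G)
    (ha : Function.Injective a) (hb : Function.Injective b)
    (P : Fin 3 × Fin (2 * n) → Fin 3 × Fin (2 * n))
    (hP_invol : ∀ p, P (P p) = p)
    (hP_nofix : ∀ p, P p ≠ p)
    (hP_row : ∀ p, (P p).1 ≠ p.1)
    (hP_col : ∀ p, (P p).2 ≠ p.2)
    (hP_invertible : ∀ i : Fin 3, Function.Injective (fun j : Fin (2 * n) => (P (i, j)).2))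
    (hrel : ∀ p : Fin 3 × Fin (2 * n), a p.1 * b p.2 = a (P p).1 * b (P p).2) :
    ∃ g : G, g ≠ 1 ∧ IsOfFinOrder g := by
  classical
  -- pointwise involution facts
  have hpair : ∀ (i k : Fin 3) (j : Fin (2 * n)), (P (i, j)).1 = k →
      (P (k, (P (i, j)).2)).1 = i ∧ (P (k, (P (i, j)).2)).2 = j := by
    intro i k j h
    have h1 : P (i, j) = (k, (P (i, j)).2) := by
      rw [← h]
    have h2 : P (k, (P (i, j)).2) = (i, j) := by
      rw [← h1, hP_invol]
    exact ⟨by rw [h2], by rw [h2]⟩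
  have hbij : ∀ i : Fin 3, Function.Bijective (fun j : Fin (2 * n) => (P (i, j)).2) :=
    fun i => Finite.injective_iff_bijective.mp (hP_invertible i)
  have himg : ∀ i k : Fin 3,
      (fun j : Fin (2 * n) => (P (i, j)).2) '' {j | (P (i, j)).1 = k}
        = {j | (P (k, j)).1 = i} := by
    intro i k
    ext j'
    constructor
    · rintro ⟨j, hj, rfl⟩
      exact (hpair i k j hj).1
    · intro hj'
      exact ⟨(P (k, j')).2, (hpair k i j' hj').1, (hpair k i j' hj').2⟩
  have hthird : ∀ (x i k l : Fin 3), i ≠ k → i ≠ l → k ≠ l → x ≠ i → x ≠ k → x = l := by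
    decide
  have hcompl : ∀ (i k l : Fin 3), i ≠ k → i ≠ l → k ≠ l →
      ({j : Fin (2 * n) | (P (i, j)).1 = k})ᶜ = {j | (P (i, j)).1 = l} := by
    intro i k l hik hil hkl
    ext j
    simp only [Set.mem_compl_iff, Set.mem_setOf_eq]
    constructor
    · intro h
      exact hthird _ i k l hik hil hkl (hP_row (i, j)) h
    · intro h hk
      rw [h] at hk
      exact hkl hk.symm
  -- the key global identities
  have hkey1 : {j : Fin (2 * n) | (P (1, j)).1 = 2} = {j | (P (2, j)).1 = 0} := by
    calc {j : Fin (2 * n) | (P (1, j)).1 = 2}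
        = ({j : Fin (2 * n) | (P (1, j)).1 = 0})ᶜ :=
          (hcompl 1 0 2 (by decide) (by decide) (by decide)).symm
      _ = ((fun j : Fin (2 * n) => (P (0, j)).2) '' {j | (P (0, j)).1 = 1})ᶜ := by
          rw [himg]
      _ = (fun j : Fin (2 * n) => (P (0, j)).2) '' ({j | (P (0, j)).1 = 1})ᶜ :=
          (Set.image_compl_eq (hbij 0)).symm
      _ = (fun j : Fin (2 * n) => (P (0, j)).2) '' {j | (P (0, j)).1 = 2} := by
          rw [hcompl 0 1 2 (by decide) (by decide) (by decide)]
      _ = {j | (P (2, j)).1 = 0} := himg 0 2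
  have hkey2 : {j : Fin (2 * n) | (P (0, j)).1 = 1} = {j | (P (1, j)).1 = 2} := by
    calc {j : Fin (2 * n) | (P (0, j)).1 = 1}
        = ({j : Fin (2 * n) | (P (0, j)).1 = 2})ᶜ := by
          rw [← hcompl 0 2 1 (by decide) (by decide) (by decide)]
      _ = ((fun j : Fin (2 * n) => (P (2, j)).2) '' {j | (P (2, j)).1 = 0})ᶜ := by
          rw [himg]
      _ = (fun j : Fin (2 * n) => (P (2, j)).2) '' ({j | (P (2, j)).1 = 0})ᶜ :=
          (Set.image_compl_eq (hbij 2)).symm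
      _ = (fun j : Fin (2 * n) => (P (2, j)).2) '' {j | (P (2, j)).1 = 1} := by
          rw [hcompl 2 0 1 (by decide) (by decide) (by decide)]
      _ = {j | (P (1, j)).1 = 2} := himg 2 1
  -- name the sets
  have hA12 : {j : Fin (2 * n) | (P (1, j)).1 = 2} = {j | (P (0, j)).1 = 1} := hkey2.symm
  have hA20 : {j : Fin (2 * n) | (P (2, j)).1 = 0} = {j | (P (0, j)).1 = 1} :=
    (hkey2.trans hkey1).symm
  have hC02 : {j : Fin (2 * n) | (P (0, j)).1 = 2} = ({j | (P (0, j)).1 = 1})ᶜ :=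
    (hcompl 0 1 2 (by decide) (by decide) (by decide)).symm
  have hC10 : {j : Fin (2 * n) | (P (1, j)).1 = 0} = ({j | (P (0, j)).1 = 1})ᶜ := by
    rw [← hcompl 1 2 0 (by decide) (by decide) (by decide), hA12]
  have hC21 : {j : Fin (2 * n) | (P (2, j)).1 = 1} = ({j | (P (0, j)).1 = 1})ᶜ := by
    rw [← hcompl 2 0 1 (by decide) (by decide) (by decide), hA20]
  -- relations
  have relgen : ∀ (i k : Fin 3) (j : Fin (2 * n)), (P (i, j)).1 = k →
      b ((P (i, j)).2) = (a k)⁻¹ * a i * b j := by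
    intro i k j h
    have h1 := hrel (i, j)
    rw [h] at h1
    rw [mul_assoc, h1, inv_mul_cancel_left]
  -- nonemptiness of A
  have hσ0A : (fun j : Fin (2 * n) => (P (0, j)).2) '' {j | (P (0, j)).1 = 1}
      = ({j : Fin (2 * n) | (P (0, j)).1 = 1})ᶜ := (himg 0 1).trans hC10
  have hAne : ({j : Fin (2 * n) | (P (0, j)).1 = 1} : Set _).Nonempty := by
    by_contra h
    rw [Set.not_nonempty_iff_eq_empty] at h
    have h2 : ({j : Fin (2 * n) | (P (0, j)).1 = 1} : Set _)ᶜ = ∅ := by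
      rw [← hσ0A, h, Set.image_empty]
    have j0 : Fin (2 * n) := ⟨0, by omega⟩
    by_cases hj : j0 ∈ {j : Fin (2 * n) | (P (0, j)).1 = 1}
    · rw [h] at hj
      exact absurd hj (Set.notMem_empty j0)
    · have hj' : j0 ∈ ({j : Fin (2 * n) | (P (0, j)).1 = 1} : Set _)ᶜ := hj
      rw [h2] at hj'
      exact absurd hj' (Set.notMem_empty j0)
  -- membership maps
  have memS1 : ∀ x ∈ b '' {j : Fin (2 * n) | (P (0, j)).1 = 1},
      ((a 1)⁻¹ * a 0) * x ∈ b '' ({j : Fin (2 * n) | (P (0, j)).1 = 1})ᶜ := by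
    rintro x ⟨j, hj, rfl⟩
    refine ⟨(P (0, j)).2, ?_, ?_⟩
    · rw [← hC10]
      exact (hpair 0 1 j hj).1
    · exact relgen 0 1 j hj
  have memS2 : ∀ x ∈ b '' ({j : Fin (2 * n) | (P (0, j)).1 = 1})ᶜ,
      ((a 2)⁻¹ * a 0) * x ∈ b '' {j : Fin (2 * n) | (P (0, j)).1 = 1} := by
    rintro x ⟨j, hj, rfl⟩
    rw [← hC02] at hj
    refine ⟨(P (0, j)).2, ?_, ?_⟩
    · rw [← hA20]
      exact (hpair 0 2 j hj).1
    · exact relgen 0 2 j hj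
  have memS3 : ∀ x ∈ b '' {j : Fin (2 * n) | (P (0, j)).1 = 1},
      ((a 2)⁻¹ * a 1) * x ∈ b '' ({j : Fin (2 * n) | (P (0, j)).1 = 1})ᶜ := by
    rintro x ⟨j, hj, rfl⟩
    rw [← hA12] at hj
    refine ⟨(P (1, j)).2, ?_, ?_⟩
    · rw [← hC21]
      exact (hpair 1 2 j hj).1
    · exact relgen 1 2 j hj
  have hSfin : (b '' {j : Fin (2 * n) | (P (0, j)).1 = 1}).Finite :=
    Set.Finite.image b (Set.toFinite _)
  have hSne : (b '' {j : Fin (2 * n) | (P (0, j)).1 = 1}).Nonempty := hAne.image b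
  by_cases h1 : ((a 2)⁻¹ * a 0) * ((a 1)⁻¹ * a 0) = 1
  · by_cases h2 : ((a 2)⁻¹ * a 0) * ((a 2)⁻¹ * a 1) = 1
    · -- torsion element (a 1)⁻¹ * a 0 of order dividing 3
      refine ⟨(a 1)⁻¹ * a 0, ?_, ?_⟩
      · intro h
        exact absurd (ha (inv_mul_eq_one.mp h)) (by decide)
      · refine isOfFinOrder_iff_pow_eq_one.mpr ⟨3, by norm_num, ?_⟩
        have e1 : (a 1)⁻¹ * a 0 = (a 0)⁻¹ * a 2 := by
          have hcd : (a 1)⁻¹ * a 0 = ((a 2)⁻¹ * a 0)⁻¹ := eq_inv_of_mul_eq_one_right h1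
          rw [hcd, mul_inv_rev, inv_inv]
        have e2 : (a 1)⁻¹ * a 0 = (a 2)⁻¹ * a 1 := mul_left_cancel (h1.trans h2.symm)
        calc ((a 1)⁻¹ * a 0) ^ 3
            = (((a 1)⁻¹ * a 0) * ((a 1)⁻¹ * a 0)) * ((a 1)⁻¹ * a 0) := by
              rw [pow_succ, pow_succ, pow_one]
          _ = (((a 1)⁻¹ * a 0) * ((a 0)⁻¹ * a 2)) * ((a 2)⁻¹ * a 1) := by rw [← e1, ← e2]
          _ = 1 := by group
    · refine ⟨((a 2)⁻¹ * a 0) * ((a 2)⁻¹ * a 1), h2, ?_⟩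
      refine finOrder_of_finite_invariant _ _ hSfin hSne ?_
      intro x hx
      rw [mul_assoc]
      exact memS2 _ (memS3 x hx)
  · refine ⟨((a 2)⁻¹ * a 0) * ((a 1)⁻¹ * a 0), h1, ?_⟩
    refine finOrder_of_finite_invariant _ _ hSfin hSne ?_
    intro x hx
    rw [mul_assoc]
    exact memS2 _ (memS1 x hx)
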